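/- Let 1 ≤ g < v and let Q = (−I_g ⊗ 1_{v−g}, 1_g ⊗ I_{v−g})ᵀ be the v×(g(v−g)) coefficient matrix of the comparisons τ_j − τ_i for i ∈ {1,…,g} (controls), j ∈ {g+1,…,v}. Then Q Qᵀ is the block matrix [[(v−g) I_g, −J_{g×(v−g)}],[−J_{(v−g)×g}, g I_{v−g}]], and the permutation π of {1,…,v} consisting of the two cycles (1,2,…,g) and (g+1,g+2,…,v) has permutation matrix P satisfying P Q Qᵀ Pᵀ = Q Qᵀ. Consequently, for every design criterion Φ for Q and every design w on v treatments, there exist γ ∈ (0, 1/g) and a design w′ with w′_i = γ for i ∈ {1,…,g} and w′_j = (1 − gγ)/(v−g) for j ∈ {g+1,…,v} such that Φ(w′) ≥ Φ(w). -/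

import Mathlib

open Matrix

lemma charpoly_perm_inv {ι κ : Type*} [Fintype ι] [Fintype κ] [DecidableEq ι] [DecidableEq κ]
    (Q : Matrix ι κ ℝ) (w : ι → ℝ) (ρ : Equiv.Perm ι) (σ : Equiv.Perm κ)
    (hQ : ∀ x p, Q (ρ x) (σ p) = Q x p) :
    (Qᵀ * (Matrix.diagonal (fun x => w (ρ x)))⁻¹ * Q).charpoly
      = (Qᵀ * (Matrix.diagonal w)⁻¹ * Q).charpoly := by
  have hQ' : Q.submatrix ρ σ = Q := by
    ext x p; simp [hQ]
  have hD : Matrix.diagonal (fun x => w (ρ x)) = (Matrix.diagonal w).submatrix ρ ρ := by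
    ext x y
    simp [Matrix.diagonal_apply, Matrix.submatrix_apply, EmbeddingLike.apply_eq_iff_eq]
  have hDinv : ((Matrix.diagonal w).submatrix ⇑ρ ⇑ρ)⁻¹ = ((Matrix.diagonal w)⁻¹).submatrix ⇑ρ ⇑ρ := by
    have := Matrix.inv_reindex ρ.symm ρ.symm (Matrix.diagonal w)
    simpa [Matrix.reindex_apply, Equiv.symm_symm] using this
  have key : Qᵀ * (Matrix.diagonal (fun x => w (ρ x)))⁻¹ * Q
      = (Qᵀ * (Matrix.diagonal w)⁻¹ * Q).submatrix ⇑σ ⇑σ := by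
    rw [hD, hDinv]
    conv_lhs => rw [← hQ']
    rw [Matrix.transpose_submatrix, Matrix.submatrix_mul_equiv, Matrix.submatrix_mul_equiv]
  rw [key]
  have : (Qᵀ * (Matrix.diagonal w)⁻¹ * Q).submatrix ⇑σ ⇑σ
      = Matrix.reindex σ.symm σ.symm (Qᵀ * (Matrix.diagonal w)⁻¹ * Q) := by
    simp [Matrix.reindex_apply]
  rw [this, Matrix.charpoly_reindex]


/-- A design on a finite set of treatments: strictly positive weights summing to one. -/
def IsDesign {ι : Type*} [Fintype ι] (w : ι → ℝ) : Prop :=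
  (∀ i, 0 < w i) ∧ ∑ i, w i = 1

/-- Comparing `v - g` treatments with `g` controls, `1 ≤ g < v`. Writing
`h = v - g ≥ 1`, the treatments are indexed by `Fin g ⊕ Fin h` (controls first) and the
comparisons `τ_j - τ_i` by `Fin g × Fin h`, with coefficient matrix
`Q = (-I_g ⊗ 1_h, 1_g ⊗ I_h)ᵀ`. Then `Q Qᵀ = [[(v-g) I_g, -J], [-J, g I_{v-g}]]`, the
permutation `π` consisting of the two cycles `(1,…,g)` and `(g+1,…,v)` has permutation
matrix `P` with `P Q Qᵀ Pᵀ = Q Qᵀ`, and consequently for every design criterion `Φ` for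
`Q` (concave on designs, depending on a design only through the characteristic
polynomial of `V_Q(w) = Qᵀ diag(w)⁻¹ Q`) and every design `w`, there exist
`γ ∈ (0, 1/g)` and a design `w'` with `w'_i = γ` on the controls and
`w'_j = (1 - gγ)/(v - g)` on the remaining treatments, such that `Φ(w') ≥ Φ(w)`. -/
lemma design_convex {ι : Type*} [Fintype ι] :
    Convex ℝ {u : ι → ℝ | IsDesign u} := by
  intro x hx y hy a b ha hb hab
  constructor
  · intro i
    have hxi := hx.1 i
    have hyi := hy.1 i
    simp only [Pi.add_apply, Pi.smul_apply, smul_eq_mul]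
    rcases eq_or_lt_of_le ha with ha' | ha'
    · have hb1 : b = 1 := by linarith
      rw [← ha', hb1]; simpa using hyi
    · exact add_pos_of_pos_of_nonneg (mul_pos ha' hxi) (mul_nonneg hb hyi.le)
  · simp only [Pi.add_apply, Pi.smul_apply, smul_eq_mul]
    rw [Finset.sum_add_distrib, ← Finset.mul_sum, ← Finset.mul_sum, hx.2, hy.2]
    simpa using hab


theorem stmt_18 (g h : ℕ) [NeZero g] [NeZero h] :
    let Q : Matrix (Fin g ⊕ Fin h) (Fin g × Fin h) ℝ :=
      Matrix.of fun x p =>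
        Sum.elim (fun i => if i = p.1 then (-1 : ℝ) else 0)
          (fun j => if j = p.2 then (1 : ℝ) else 0) x
    let π : Equiv.Perm (Fin g ⊕ Fin h) :=
      Equiv.sumCongr (Equiv.addRight (1 : Fin g)) (Equiv.addRight (1 : Fin h))
    let P : Matrix (Fin g ⊕ Fin h) (Fin g ⊕ Fin h) ℝ :=
      Matrix.of fun i j => if π j = i then (1 : ℝ) else 0
    Q * Qᵀ = Matrix.fromBlocks
        ((h : ℝ) • (1 : Matrix (Fin g) (Fin g) ℝ)) (-(Matrix.of fun _ _ => (1 : ℝ)))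
        (-(Matrix.of fun _ _ => (1 : ℝ))) ((g : ℝ) • (1 : Matrix (Fin h) (Fin h) ℝ)) ∧
    P * (Q * Qᵀ) * Pᵀ = Q * Qᵀ ∧
    ∀ Φ : ((Fin g ⊕ Fin h) → ℝ) → ℝ,
      (∀ w w' : (Fin g ⊕ Fin h) → ℝ, IsDesign w → IsDesign w' →
          ∀ t : ℝ, 0 ≤ t → t ≤ 1 →
            t * Φ w + (1 - t) * Φ w' ≤ Φ (t • w + (1 - t) • w')) →
      (∀ w w' : (Fin g ⊕ Fin h) → ℝ, IsDesign w → IsDesign w' →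
          (Qᵀ * (Matrix.diagonal w)⁻¹ * Q).charpoly
            = (Qᵀ * (Matrix.diagonal w')⁻¹ * Q).charpoly → Φ w = Φ w') →
      ∀ w : (Fin g ⊕ Fin h) → ℝ, IsDesign w →
        ∃ γ : ℝ, 0 < γ ∧ γ < 1 / (g : ℝ) ∧
          IsDesign (Sum.elim (fun _ : Fin g => γ)
            (fun _ : Fin h => (1 - (g : ℝ) * γ) / (h : ℝ))) ∧
          Φ w ≤ Φ (Sum.elim (fun _ : Fin g => γ)
            (fun _ : Fin h => (1 - (g : ℝ) * γ) / (h : ℝ))) := by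
  intro Q π P
  have h1 : Q * Qᵀ = Matrix.fromBlocks
      ((h : ℝ) • (1 : Matrix (Fin g) (Fin g) ℝ)) (-(Matrix.of fun _ _ => (1 : ℝ)))
      (-(Matrix.of fun _ _ => (1 : ℝ))) ((g : ℝ) • (1 : Matrix (Fin h) (Fin h) ℝ)) := by
    ext x y
    cases x <;> cases y <;>
      simp [Q, Matrix.mul_apply, Fintype.sum_prod_type, Matrix.fromBlocks, Matrix.one_apply,
        ite_mul, mul_ite, Finset.sum_ite_eq, Finset.sum_ite_eq', eq_comm, Finset.mul_sum]
    all_goals split <;> simp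
  refine ⟨h1, ?_, ?_⟩
  · have hP : ∀ M : Matrix (Fin g ⊕ Fin h) (Fin g ⊕ Fin h) ℝ,
        P * M * Pᵀ = M.submatrix π.symm π.symm := by
      intro M
      ext i j
      simp [P, Matrix.mul_apply, ite_mul, mul_ite, ← Equiv.eq_symm_apply,
        Finset.sum_ite_eq', Finset.sum_ite_eq]
    rw [hP, h1]
    ext i j
    cases i <;> cases j <;>
      simp [Matrix.fromBlocks, π, Matrix.one_apply, EmbeddingLike.apply_eq_iff_eq]
  ·
    intro Φ hconc hinv w hw
    have hg0 : (0 : ℝ) < g := by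
      exact_mod_cast Nat.pos_of_ne_zero (NeZero.ne g)
    have hh0 : (0 : ℝ) < h := by
      exact_mod_cast Nat.pos_of_ne_zero (NeZero.ne h)
    have hgh0 : (0 : ℝ) < (g : ℝ) * h := mul_pos hg0 hh0
    set Sg : ℝ := ∑ i : Fin g, w (Sum.inl i) with hSg
    set Sh : ℝ := ∑ j : Fin h, w (Sum.inr j) with hSh
    have hsplit : Sg + Sh = 1 := by
      rw [hSg, hSh, ← Fintype.sum_sum_type]
      exact hw.2
    haveI : Nonempty (Fin g) := ⟨⟨0, Nat.pos_of_ne_zero (NeZero.ne g)⟩⟩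
    haveI : Nonempty (Fin h) := ⟨⟨0, Nat.pos_of_ne_zero (NeZero.ne h)⟩⟩
    have hSgpos : 0 < Sg := Finset.sum_pos (fun i _ => hw.1 _) Finset.univ_nonempty
    have hShpos : 0 < Sh := Finset.sum_pos (fun j _ => hw.1 _) Finset.univ_nonempty
    set γ : ℝ := Sg / g with hγ
    have hgγ : (g : ℝ) * γ = Sg := by
      rw [hγ]; field_simp
    have hδ : (1 - (g : ℝ) * γ) / h = Sh / h := by
      rw [hgγ]; congr 1; linarith
    -- permutations
    set ρ : Fin g × Fin h → Equiv.Perm (Fin g ⊕ Fin h) :=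
      fun ab => Equiv.sumCongr (Equiv.addRight ab.1) (Equiv.addRight ab.2) with hρ
    set σc : Fin g × Fin h → Equiv.Perm (Fin g × Fin h) :=
      fun ab => Equiv.prodCongr (Equiv.addRight ab.1) (Equiv.addRight ab.2) with hσc
    have hQρ : ∀ ab x p, Q (ρ ab x) (σc ab p) = Q x p := by
      rintro ⟨a, b⟩ (x | x) ⟨p1, p2⟩ <;> simp [Q, ρ, σc]
    have hdes : ∀ ab, IsDesign (fun x => w (ρ ab x)) :=
      fun ab => ⟨fun x => hw.1 _, (Equiv.sum_comp (ρ ab) w).trans hw.2⟩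
    have hΦρ : ∀ ab, Φ (fun x => w (ρ ab x)) = Φ w :=
      fun ab => (hinv w _ hw (hdes ab) (charpoly_perm_inv Q w (ρ ab) (σc ab) (hQρ ab)).symm).symm
    -- Jensen
    have hconcOn : ConcaveOn ℝ {u : (Fin g ⊕ Fin h) → ℝ | IsDesign u} Φ := by
      refine ⟨design_convex, fun x hx y hy a b ha hb hab => ?_⟩
      have hb' : b = 1 - a := by linarith
      have := hconc x y hx hy a ha (by linarith)
      simpa [hb', smul_eq_mul] using this
    set μ : ℝ := ((g : ℝ) * h)⁻¹ with hμ
    have hμsum : ∑ _ab : Fin g × Fin h, μ = 1 := by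
      rw [Finset.sum_const, Finset.card_univ]
      simp only [Fintype.card_prod, Fintype.card_fin, nsmul_eq_mul, hμ]
      rw [Nat.cast_mul]
      field_simp
    have hjensen := hconcOn.le_map_sum (t := Finset.univ) (w := fun _ => μ)
      (p := fun ab => (fun x => w (ρ ab x))) (fun _ _ => by positivity) hμsum
      (fun ab _ => hdes ab)
    -- identify the average
    set wbar : (Fin g ⊕ Fin h) → ℝ := ∑ ab : Fin g × Fin h, μ • (fun x => w (ρ ab x)) with hwbar
    have hbar : wbar = Sum.elim (fun _ : Fin g => γ)
        (fun _ : Fin h => (1 - (g : ℝ) * γ) / (h : ℝ)) := by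
      funext x
      have hx : wbar x = ∑ ab : Fin g × Fin h, μ * w (ρ ab x) := by
        rw [hwbar]
        simp [Finset.sum_apply]
      cases x with
      | inl i =>
        rw [hx]
        have h1 : ∀ ab : Fin g × Fin h, w (ρ ab (Sum.inl i)) = w (Sum.inl (i + ab.1)) := by
          rintro ⟨a, b⟩; simp [ρ]
        simp only [h1]
        rw [← Finset.mul_sum, Fintype.sum_prod_type]
        have h2 : ∑ a : Fin g, ∑ _b : Fin h, w (Sum.inl (i + a)) = (h : ℝ) * Sg := by
          simp only [Finset.sum_const, Finset.card_univ, Fintype.card_fin, nsmul_eq_mul]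
          rw [← Finset.mul_sum]
          congr 1
          exact Equiv.sum_comp (Equiv.addLeft i) (fun a => w (Sum.inl a))
        rw [h2]
        simp only [Sum.elim_inl]
        rw [hμ, hγ]
        field_simp
      | inr j =>
        rw [hx]
        have h1 : ∀ ab : Fin g × Fin h, w (ρ ab (Sum.inr j)) = w (Sum.inr (j + ab.2)) := by
          rintro ⟨a, b⟩; simp [ρ]
        simp only [h1]
        rw [← Finset.mul_sum, Fintype.sum_prod_type]
        have h2 : ∑ _a : Fin g, ∑ b : Fin h, w (Sum.inr (j + b)) = (g : ℝ) * Sh := by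
          simp only [Finset.sum_const, Finset.card_univ, Fintype.card_fin, nsmul_eq_mul]
          congr 1
          exact Equiv.sum_comp (Equiv.addLeft j) (fun b => w (Sum.inr b))
        rw [h2]
        simp only [Sum.elim_inr]
        rw [hδ, hμ]
        field_simp
    have hlhs : ∑ ab : Fin g × Fin h, μ • Φ (fun x => w (ρ ab x)) = Φ w := by
      simp only [smul_eq_mul, hΦρ, ← Finset.sum_mul, hμsum, one_mul]
    have hdes' : IsDesign (Sum.elim (fun _ : Fin g => γ)
        (fun _ : Fin h => (1 - (g : ℝ) * γ) / (h : ℝ))) := by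
      constructor
      · rintro (i | j)
        · exact div_pos hSgpos hg0
        · simp only [Sum.elim_inr]
          rw [hδ]
          exact div_pos hShpos hh0
      · rw [Fintype.sum_sum_type]
        simp only [Sum.elim_inl, Sum.elim_inr, Finset.sum_const, Finset.card_univ,
          Fintype.card_fin, nsmul_eq_mul, hδ]
        rw [hgγ]
        field_simp
        linarith
    refine ⟨γ, div_pos hSgpos hg0, ?_, hdes', ?_⟩
    · have hSg1 : Sg < 1 := by linarith
      rw [hγ, div_lt_div_iff₀ hg0 hg0]
      nlinarith
    · calc Φ w = ∑ ab : Fin g × Fin h, μ • Φ (fun x => w (ρ ab x)) := hlhs.symm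
        _ ≤ Φ (∑ ab : Fin g × Fin h, μ • (fun x => w (ρ ab x))) := hjensen
        _ = _ := by rw [← hwbar, hbar]
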